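/- arXiv:1711.01130 — 2 statements merged into one kernel-verified Lean document; each statement's English description precedes it below -/
import Mathlib

section
/- Let R be a commutative ring, M an R-module, T a multiplicative subset of R consisting of non-zero-divisors on M, and m ∈ M. Then the annihilator of m ⊗ (1/1) in M ⊗_R T⁻¹R (as a T⁻¹R-module) equals the localization T⁻¹(ann_R(m)) of the annihilator of m. -/
open TensorProduct

/-- If `T` consists of non-zero-divisors on `M`, then the annihilator of
`1 ⊗ m` in `T⁻¹R ⊗[R] M` (as a `T⁻¹R`-module) is the localization
`T⁻¹(ann_R m)` of the annihilator of `m`. -/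
theorem torsionOf_baseChange_localization
    (R : Type*) [CommRing R] (M : Type*) [AddCommGroup M] [Module R M]
    (T : Submonoid R) (hT : ∀ t ∈ T, ∀ x : M, t • x = 0 → x = 0) (m : M) :
    Ideal.torsionOf (Localization T) (Localization T ⊗[R] M)
        ((1 : Localization T) ⊗ₜ[R] m)
      = (Ideal.torsionOf R M m).map (algebraMap R (Localization T)) := by
  set f : M →ₗ[R] Localization T ⊗[R] M := TensorProduct.mk R (Localization T) M 1 with hf
  have hloc : IsLocalizedModule T f := by
    rw [isLocalizedModule_iff_isBaseChange T (Localization T)]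
    exact TensorProduct.isBaseChange R M (Localization T)
  have hinj : ∀ x : M, f x = 0 → x = 0 := by
    intro x hx
    obtain ⟨t, ht⟩ := (IsLocalizedModule.eq_zero_iff T f).mp hx
    exact hT t t.2 x ht
  apply le_antisymm
  · intro a ha
    rw [Ideal.mem_torsionOf_iff] at ha
    obtain ⟨⟨r, t⟩, rfl⟩ := IsLocalization.mk'_surjective T a
    dsimp only at ha ⊢
    have h1 : (algebraMap R (Localization T) r) • ((1 : Localization T) ⊗ₜ[R] m) = 0 := by
      rw [← IsLocalization.mk'_spec (Localization T) r t, mul_smul, smul_comm, ha, smul_zero]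
    have h2 : r • m = 0 := by
      apply hinj
      have : f (r • m) = (algebraMap R (Localization T) r) • ((1 : Localization T) ⊗ₜ[R] m) := by
        simp [hf, TensorProduct.smul_tmul, algebraMap_smul]
      rw [this, h1]
    rw [IsLocalization.mk'_eq_mul_mk'_one]
    exact Ideal.mul_mem_right _ _
      (Ideal.mem_map_of_mem _ ((Ideal.mem_torsionOf_iff m r).mpr h2))
  · rw [Ideal.map_le_iff_le_comap]
    intro r hr
    rw [Ideal.mem_torsionOf_iff] at hr
    simp only [Ideal.mem_comap, Ideal.mem_torsionOf_iff]
    rw [algebraMap_smul, ← TensorProduct.tmul_smul, hr, TensorProduct.tmul_zero]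
end

section
/- Let M be an R-module and let x₁, …, xₙ (n ≥ 5) be distinct nonzero elements of M such that [xᵢ : M]·[xⱼ : M] • M = 0 holds exactly when |i − j| = 1 or {i, j} = {1, n} (i.e., these elements induce an n-cycle in the full-annihilating graph), and assume the xᵢ are the only full-annihilators. Then a contradiction follows; that is, the full-annihilating graph of M is never an n-gon for n ≥ 5. -/
/-- The ideal `[x : M]` for an element `x` of a module `M`. -/
def colonIdeal {R : Type*} [CommRing R] {M : Type*} [AddCommGroup M] [Module R M]
    (x : M) : Ideal R :=
  (Submodule.span R ({x} : Set M)).colon ⊤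

theorem mem_colonIdeal {R : Type*} [CommRing R] {M : Type*} [AddCommGroup M] [Module R M]
    {x : M} {r : R} : r ∈ colonIdeal (R := R) x ↔ ∀ m : M, r • m ∈ Submodule.span R {x} := by
  constructor
  · intro h m
    exact Submodule.mem_colon.mp h m trivial
  · intro h
    exact Submodule.mem_colon.mpr fun p _ => h p

theorem smulTop_eq_bot_iff {R : Type*} [CommRing R] {M : Type*} [AddCommGroup M] [Module R M]
    (I : Ideal R) : I • (⊤ : Submodule R M) = ⊥ ↔ ∀ r ∈ I, ∀ m : M, r • m = 0 := by
  constructor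
  · intro h r hr m
    have : r • m ∈ I • (⊤ : Submodule R M) := Submodule.smul_mem_smul hr trivial
    rw [h] at this
    simpa using this
  · intro h
    rw [eq_bot_iff]
    exact Submodule.smul_le.mpr fun r hr m _ => by simpa using h r hr m

/-- The full-annihilating graph of a module is never an `n`-gon for `n ≥ 5`:
if distinct nonzero `x₁, …, xₙ` induce exactly an `n`-cycle and are the only
nonzero full-annihilators, a contradiction follows. -/
theorem full_annihilating_graph_not_ngon
    (R : Type*) [CommRing R] (M : Type*) [AddCommGroup M] [Module R M]
    (n : ℕ) (hn : 5 ≤ n) (x : Fin n → M)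
    (hinj : Function.Injective x) (hne : ∀ i, x i ≠ 0)
    (hadj : ∀ i j : Fin n,
      ((colonIdeal (x i) * colonIdeal (x j) : Ideal R)) • (⊤ : Submodule R M) = ⊥ ↔
        (i.val + 1 = j.val ∨ j.val + 1 = i.val ∨
          (i.val = 0 ∧ j.val + 1 = n) ∨ (j.val = 0 ∧ i.val + 1 = n)))
    (honly : ∀ m : M, m ≠ 0 →
      (∃ y : M, y ≠ 0 ∧ colonIdeal (R := R) y ≠ ⊤ ∧
        ((colonIdeal m * colonIdeal y : Ideal R)) • (⊤ : Submodule R M) = ⊥) →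
      ∃ i : Fin n, m = x i) :
    False := by
  set I : Fin n → Ideal R := fun i => colonIdeal (R := R) (x i) with hI
  -- adjacency facts
  have h01 : (I ⟨0, by omega⟩ * I ⟨1, by omega⟩) • (⊤ : Submodule R M) = ⊥ :=
    (hadj _ _).mpr (Or.inl rfl)
  have h12 : (I ⟨1, by omega⟩ * I ⟨2, by omega⟩) • (⊤ : Submodule R M) = ⊥ :=
    (hadj _ _).mpr (Or.inl rfl)
  have h02 : (I ⟨0, by omega⟩ * I ⟨2, by omega⟩) • (⊤ : Submodule R M) ≠ ⊥ := by
    intro h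
    have := (hadj _ _).mp h
    simp only [] at this
    omega
  -- x 1 is not the whole ring as colon ideal
  have hI1ne : I ⟨1, by omega⟩ ≠ ⊤ := by
    intro htop
    apply h02
    rw [smulTop_eq_bot_iff]
    intro r hr m
    have hr0 : r ∈ I ⟨0, by omega⟩ := Ideal.mul_le_left hr
    have h1 : (1 : R) ∈ I ⟨1, by omega⟩ := by rw [htop]; trivial
    have := (smulTop_eq_bot_iff _).mp h01 (r * 1) (Ideal.mul_mem_mul hr0 h1) m
    simpa using this
  -- pick a nonzero z in (I 0 * I 2) • ⊤
  obtain ⟨z, hzmem, hz0⟩ := Submodule.exists_mem_ne_zero_of_ne_bot h02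
  -- I 1 kills z
  have hkill : ∀ s ∈ I ⟨1, by omega⟩, s • z = 0 := by
    intro s hs
    have : s • z ∈ (I ⟨1, by omega⟩) • ((I ⟨0, by omega⟩ * I ⟨2, by omega⟩) • (⊤ : Submodule R M)) :=
      Submodule.smul_mem_smul hs hzmem
    have heq : (I ⟨1, by omega⟩) • ((I ⟨0, by omega⟩ * I ⟨2, by omega⟩) • (⊤ : Submodule R M))
        = (I ⟨2, by omega⟩) • ((I ⟨0, by omega⟩ * I ⟨1, by omega⟩) • (⊤ : Submodule R M)) := by
      rw [← Submodule.smul_assoc, ← Submodule.smul_assoc, smul_eq_mul, smul_eq_mul]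
      ring_nf
    rw [heq, h01, Submodule.smul_bot] at this
    simpa using this
  -- z is adjacent to x 1
  have hzadj : (colonIdeal z * I ⟨1, by omega⟩) • (⊤ : Submodule R M) = ⊥ := by
    rw [smulTop_eq_bot_iff]
    intro a ha m
    induction ha using Submodule.mul_induction_on' with
    | mem_mul_mem r hr s hs =>
        obtain ⟨c, hc⟩ := Submodule.mem_span_singleton.mp (mem_colonIdeal.mp hr m)
        rw [mul_comm, mul_smul, ← hc, smul_comm, hkill s hs, smul_zero]
    | add a ha b hb iha ihb =>
        rw [add_smul, iha, ihb, add_zero]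
  -- hence z is one of the x i
  obtain ⟨i, hzi⟩ := honly z hz0 ⟨x ⟨1, by omega⟩, hne _, hI1ne, hzadj⟩
  -- z lies in span {x 0} and span {x 2}
  have hsub : ∀ (a b : Fin n), (I a * I b) • (⊤ : Submodule R M) ≤ Submodule.span R {x a} := by
    intro a b
    rw [← smul_eq_mul, Submodule.smul_assoc]
    refine le_trans (Submodule.smul_le.mpr ?_) le_rfl
    intro r hr m _
    exact mem_colonIdeal.mp hr m
  have hz_in0 : z ∈ Submodule.span R {x ⟨0, by omega⟩} := hsub _ _ hzmem
  have hz_in2 : z ∈ Submodule.span R {x ⟨2, by omega⟩} := by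
    have : (I ⟨0, by omega⟩ * I ⟨2, by omega⟩) = (I ⟨2, by omega⟩ * I ⟨0, by omega⟩) := mul_comm _ _
    exact hsub ⟨2, by omega⟩ ⟨0, by omega⟩ (this ▸ hzmem)
  -- colonIdeal (x i) is contained in I 0 and I 2
  have hle : ∀ (a : Fin n), z ∈ Submodule.span R {x a} → I i ≤ I a := by
    intro a hza r hr
    have hspan : Submodule.span R {x i} ≤ Submodule.span R {x a} := by
      rw [Submodule.span_le, Set.singleton_subset_iff, ← hzi]
      exact hza
    exact mem_colonIdeal.mpr fun m => hspan (mem_colonIdeal.mp hr m)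
  have hle0 : I i ≤ I ⟨0, by omega⟩ := hle _ hz_in0
  have hle2 : I i ≤ I ⟨2, by omega⟩ := hle _ hz_in2
  -- x i is adjacent to x 1, x 3, x (n-1)
  have hmono : ∀ (a b c : Fin n), I a ≤ I b → (I b * I c) • (⊤ : Submodule R M) = ⊥ →
      (I a * I c) • (⊤ : Submodule R M) = ⊥ := by
    intro a b c hab h
    rw [eq_bot_iff, ← h]
    exact Submodule.smul_mono_left (mul_le_mul_left hab _)
  have h23 : (I ⟨2, by omega⟩ * I ⟨3, by omega⟩) • (⊤ : Submodule R M) = ⊥ :=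
    (hadj _ _).mpr (Or.inl rfl)
  have h0n : (I ⟨0, by omega⟩ * I ⟨n - 1, by omega⟩) • (⊤ : Submodule R M) = ⊥ :=
    (hadj _ _).mpr (Or.inr (Or.inr (Or.inl ⟨rfl, by show n - 1 + 1 = n; omega⟩)))
  have a1 := (hadj i ⟨1, by omega⟩).mp (hmono _ _ _ hle0 h01)
  have a3 := (hadj i ⟨3, by omega⟩).mp (hmono _ _ _ hle2 h23)
  have an := (hadj i ⟨n - 1, by omega⟩).mp (hmono _ _ _ hle0 h0n)
  simp only [Fin.val_mk] at a1 a3 an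
  have := i.2
  omega
end
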